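/- Let X and Y be independent random nodes each sampled from the distribution π. Then E[d_X*/d_Y*] = n* · Σ_{v_i∈V*} (d_i*/D*)², and consequently E[d_X*/d_Y*] / E[1{X = Y}] = n*. -/

import Mathlib

open Finset MeasureTheory

/-- computation behind Lemma 4.1: the node collision estimator converges
to `n*`.  `V* = {v_1, …, v_{n*}}` is a finite set of `n* = m` nodes, each `v_i` with
public-degree `1 ≤ d_i*` and degree `d_i ≥ d_i*`; `D* = Σ_i d_i*`.  If `X` and `Y` are
independent random nodes each sampled from `π(v_i) = d_i*/D*`, then
`E[d_X*/d_Y*] = n* · Σ_i (d_i*/D*)²`, and consequently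
`E[d_X*/d_Y*] / E[1{X = Y}] = n*`. -/
lemma aux_int {m : ℕ} {Ω : Type*} [MeasurableSpace Ω] (μ : Measure Ω)
    [IsProbabilityMeasure μ] (X Y : Ω → Fin m) (hX : Measurable X) (hY : Measurable Y)
    (p : Fin m → Fin m → ℝ) (hp : ∀ i j, 0 ≤ p i j)
    (hjoint : ∀ i j : Fin m, μ {ω | X ω = i ∧ Y ω = j} = ENNReal.ofReal (p i j))
    (g : Fin m → Fin m → ℝ) :
    ∫ ω, g (X ω) (Y ω) ∂μ = ∑ i, ∑ j, g i j * p i j := by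
  have hmeas : ∀ i j : Fin m, MeasurableSet {ω | X ω = i ∧ Y ω = j} := by
    intro i j
    have : {ω | X ω = i ∧ Y ω = j} = X ⁻¹' {i} ∩ Y ⁻¹' {j} := by
      ext ω; simp [Set.mem_setOf_eq, Set.mem_inter_iff, Set.mem_preimage, Set.mem_singleton_iff]
    rw [this]
    exact (hX (measurableSet_singleton i)).inter (hY (measurableSet_singleton j))
  have key : ∀ ω, g (X ω) (Y ω)
      = ∑ i, ∑ j, Set.indicator {ω | X ω = i ∧ Y ω = j} (fun _ => g i j) ω := by
    intro ω
    have : ∀ i j, Set.indicator {ω | X ω = i ∧ Y ω = j} (fun _ => g i j) ω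
        = if X ω = i then (if Y ω = j then g i j else 0) else 0 := by
      intro i j
      by_cases h1 : X ω = i <;> by_cases h2 : Y ω = j <;>
        simp [Set.indicator, Set.mem_setOf_eq, h1, h2]
    simp [this]
  rw [MeasureTheory.integral_congr_ae (Filter.Eventually.of_forall key)]
  rw [MeasureTheory.integral_finset_sum]
  · refine Finset.sum_congr rfl fun i _ => ?_
    rw [MeasureTheory.integral_finset_sum]
    · refine Finset.sum_congr rfl fun j _ => ?_
      rw [MeasureTheory.integral_indicator_const _ (hmeas i j), measureReal_def, hjoint i j,
        ENNReal.toReal_ofReal (hp i j)]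
      simp [mul_comm]
    · intro j _
      exact (integrable_const _).indicator (hmeas i j)
  · intro i _
    exact integrable_finset_sum _ fun j _ => (integrable_const _).indicator (hmeas i j)

theorem stmt_6 {m : ℕ} (hm : 1 ≤ m) (dstar d : Fin m → ℕ)
    (hds : ∀ i, 1 ≤ dstar i) (hdd : ∀ i, dstar i ≤ d i)
    {Ω : Type*} [MeasurableSpace Ω] (μ : Measure Ω) [IsProbabilityMeasure μ]
    (X Y : Ω → Fin m) (hX : Measurable X) (hY : Measurable Y)
    (hjoint : ∀ i j : Fin m,
      μ {ω | X ω = i ∧ Y ω = j}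
        = ENNReal.ofReal (((dstar i : ℝ) / ∑ k, (dstar k : ℝ)) *
            ((dstar j : ℝ) / ∑ k, (dstar k : ℝ)))) :
    (∫ ω, (dstar (X ω) : ℝ) / (dstar (Y ω) : ℝ) ∂μ
        = (m : ℝ) * ∑ i, ((dstar i : ℝ) / ∑ k, (dstar k : ℝ)) ^ 2) ∧
    (∫ ω, (dstar (X ω) : ℝ) / (dstar (Y ω) : ℝ) ∂μ) /
        (∫ ω, (if X ω = Y ω then (1 : ℝ) else 0) ∂μ) = (m : ℝ) := by
  set D : ℝ := ∑ k, (dstar k : ℝ) with hD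
  have hmne : (Finset.univ : Finset (Fin m)).Nonempty := by
    have : 0 < m := hm
    exact Finset.univ_nonempty_iff.mpr (Fin.pos_iff_nonempty.mp this)
  have hdpos : ∀ i, (0:ℝ) < dstar i := fun i => by
    exact_mod_cast Nat.lt_of_lt_of_le Nat.zero_lt_one (hds i)
  have hDpos : 0 < D := Finset.sum_pos (fun i _ => hdpos i) hmne
  have hp : ∀ i j : Fin m, 0 ≤ ((dstar i : ℝ)/D) * ((dstar j : ℝ)/D) := fun i j =>
    mul_nonneg (div_nonneg (hdpos i).le hDpos.le) (div_nonneg (hdpos j).le hDpos.le)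
  have hS : 0 < ∑ i, ((dstar i : ℝ)/D)^2 :=
    Finset.sum_pos (fun i _ => pow_pos (div_pos (hdpos i) hDpos) 2) hmne
  have h1 : ∫ ω, (dstar (X ω) : ℝ) / (dstar (Y ω) : ℝ) ∂μ
      = (m : ℝ) * ∑ i, ((dstar i : ℝ)/D)^2 := by
    rw [aux_int μ X Y hX hY _ hp hjoint (fun i j => (dstar i : ℝ)/(dstar j : ℝ))]
    have h2 : ∀ i j : Fin m, ((dstar i : ℝ)/(dstar j : ℝ)) * (((dstar i : ℝ)/D) * ((dstar j : ℝ)/D))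
        = ((dstar i : ℝ)/D)^2 := by
      intro i j
      have := (hdpos j).ne'
      field_simp
    simp only [h2, Finset.sum_const, Finset.card_univ, Fintype.card_fin, nsmul_eq_mul]
    rw [← Finset.mul_sum]
  have h3 : ∫ ω, (if X ω = Y ω then (1:ℝ) else 0) ∂μ = ∑ i, ((dstar i : ℝ)/D)^2 := by
    rw [aux_int μ X Y hX hY _ hp hjoint (fun i j => if i = j then (1:ℝ) else 0)]
    refine Finset.sum_congr rfl fun i _ => ?_
    rw [Finset.sum_eq_single i]
    · simp; ring
    · intro j _ hj; simp [Ne.symm hj]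
    · intro h; exact absurd (Finset.mem_univ i) h
  refine ⟨h1, ?_⟩
  rw [h1, h3, mul_div_assoc, div_self hS.ne', mul_one]
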